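/- Let $1<p<N$ and $v(x)=|x|^{-\gamma}(1-\delta|x|^{\epsilon})$ with $\gamma,\delta,\epsilon$ real, defined for $x\ne0$ with $1-\delta|x|^\epsilon\ne0$. Then for $x\ne 0$, $-\Delta_p v-\frac{\mu}{|x|^p}|v|^{p-2}v = \frac{h(\delta|x|^\epsilon)}{|1-\delta|x|^\epsilon|^{p-2}(1-\delta|x|^\epsilon)\,|x|^p}\,|v|^{p-2}v$, where $h(t)=|\gamma-(\gamma-\epsilon)t|^{p-2}[k(\gamma-\epsilon)t-k(\gamma)]-\mu|1-t|^{p-2}(1-t)$ and $k(s)=(p-1)s^2-(N-p)s$. -/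

import Mathlib

/-- `k(s) = (p-1)s² - (N-p)s`. -/
def kfun (N p s : ℝ) : ℝ := (p - 1) * s ^ 2 - (N - p) * s

/-- `h(t) = |γ-(γ-ε)t|^(p-2) [k(γ-ε)t - k(γ)] - μ|1-t|^(p-2)(1-t)`. -/
noncomputable def hfun (N p μ γ ε t : ℝ) : ℝ :=
  |γ - (γ - ε) * t| ^ (p - 2) * (kfun N p (γ - ε) * t - kfun N p γ) -
    μ * |1 - t| ^ (p - 2) * (1 - t)

/-- The `p`-Laplacian `Δ_p v = div(|∇v|^(p-2) ∇v)`, written pointwise as the trace of the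
derivative of the vector field `|∇v|^(p-2) ∇v`. -/
noncomputable def pLap (N : ℕ) (p : ℝ) (v : EuclideanSpace ℝ (Fin N) → ℝ)
    (x : EuclideanSpace ℝ (Fin N)) : ℝ :=
  ∑ i : Fin N,
    fderiv ℝ (fun y => (‖gradient v y‖ ^ (p - 2) • gradient v y) i) x
      (EuclideanSpace.single i 1)

/-! ### Auxiliary one-dimensional calculus lemmas -/

open Real in
lemma aux_hasDerivAt_abs_mul (p : ℝ) {c : ℝ} (hc : c ≠ 0) :
    HasDerivAt (fun t : ℝ => |t| ^ (p - 2) * t) ((p - 1) * |c| ^ (p - 2)) c := by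
  rcases hc.lt_or_gt with h | h
  · have hd : HasDerivAt (fun t : ℝ => -((-t) ^ (p - 1))) ((p-1) * (-c) ^ (p-2)) c := by
      have h1 : HasDerivAt (fun u : ℝ => u ^ (p - 1)) ((p - 1) * (-c) ^ (p - 1 - 1)) (-c) :=
        Real.hasDerivAt_rpow_const (Or.inl (by linarith))
      have h2 := (h1.comp c (hasDerivAt_neg c)).neg
      refine h2.congr_deriv ?_
      rw [show p - 1 - 1 = p - 2 by ring]; ring
    have heq : (fun t : ℝ => |t| ^ (p - 2) * t) =ᶠ[nhds c] (fun t : ℝ => -((-t) ^ (p - 1))) := by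
      filter_upwards [eventually_lt_nhds h] with t ht
      have h0 : (0:ℝ) < -t := by linarith
      rw [abs_of_neg ht]
      rw [show (p - 1 : ℝ) = (p-2) + 1 by ring, Real.rpow_add h0, Real.rpow_one]
      ring
    have := hd.congr_of_eventuallyEq heq
    rwa [abs_of_neg h]
  · have hd : HasDerivAt (fun t : ℝ => t ^ (p - 1)) ((p-1) * c ^ (p-2)) c := by
      have h1 : HasDerivAt (fun u : ℝ => u ^ (p - 1)) ((p - 1) * c ^ (p - 1 - 1)) c :=
        Real.hasDerivAt_rpow_const (Or.inl h.ne')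
      convert h1 using 2; ring
    have heq : (fun t : ℝ => |t| ^ (p - 2) * t) =ᶠ[nhds c] (fun t : ℝ => t ^ (p - 1)) := by
      filter_upwards [eventually_gt_nhds h] with t ht
      rw [abs_of_pos ht, show (p - 1 : ℝ) = (p-2) + 1 by ring, Real.rpow_add ht, Real.rpow_one]
    have := hd.congr_of_eventuallyEq heq
    rwa [abs_of_pos h]

noncomputable def auxPhi (γ δ ε s : ℝ) : ℝ := s ^ (-γ/2) - δ * s ^ ((ε-γ)/2)
noncomputable def auxPhi' (γ δ ε s : ℝ) : ℝ :=
  (-γ/2) * s ^ (-γ/2-1) - δ * ((ε-γ)/2) * s ^ ((ε-γ)/2-1)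
noncomputable def auxPhi'' (γ δ ε s : ℝ) : ℝ :=
  (-γ/2) * ((-γ/2-1) * s ^ (-γ/2-1-1)) - δ * ((ε-γ)/2) * (((ε-γ)/2-1) * s ^ ((ε-γ)/2-1-1))

lemma auxPhi_hasDerivAt (γ δ ε : ℝ) {s : ℝ} (hs : s ≠ 0) :
    HasDerivAt (auxPhi γ δ ε) (auxPhi' γ δ ε s) s := by
  have h1 : HasDerivAt (fun u : ℝ => u ^ (-γ/2)) ((-γ/2) * s ^ (-γ/2 - 1)) s :=
    Real.hasDerivAt_rpow_const (Or.inl hs)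
  have h2 : HasDerivAt (fun u : ℝ => u ^ ((ε-γ)/2)) (((ε-γ)/2) * s ^ ((ε-γ)/2 - 1)) s :=
    Real.hasDerivAt_rpow_const (Or.inl hs)
  exact (h1.sub (h2.const_mul δ)).congr_deriv (by unfold auxPhi'; ring)

lemma auxPhi'_hasDerivAt (γ δ ε : ℝ) {s : ℝ} (hs : s ≠ 0) :
    HasDerivAt (auxPhi' γ δ ε) (auxPhi'' γ δ ε s) s := by
  have h1 : HasDerivAt (fun u : ℝ => u ^ (-γ/2-1)) ((-γ/2-1) * s ^ (-γ/2-1-1)) s :=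
    Real.hasDerivAt_rpow_const (Or.inl hs)
  have h2 : HasDerivAt (fun u : ℝ => u ^ ((ε-γ)/2-1)) (((ε-γ)/2-1) * s ^ ((ε-γ)/2-1-1)) s :=
    Real.hasDerivAt_rpow_const (Or.inl hs)
  have h3 := (h1.const_mul (-γ/2)).sub (h2.const_mul (δ * ((ε-γ)/2)))
  exact h3

lemma sq_rpow {r : ℝ} (hr : 0 ≤ r) (a : ℝ) : (r ^ 2 : ℝ) ^ a = r ^ (2 * a) := by
  rw [← Real.rpow_natCast r 2, ← Real.rpow_mul hr]
  norm_num

lemma v_eq_Phi (γ δ ε : ℝ) {N : ℕ} {y : EuclideanSpace ℝ (Fin N)} (hy : y ≠ 0) :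
    ‖y‖ ^ (-γ) * (1 - δ * ‖y‖ ^ ε) = auxPhi γ δ ε (‖y‖ ^ 2) := by
  have hr : (0:ℝ) < ‖y‖ := norm_pos_iff.mpr hy
  rw [auxPhi, sq_rpow hr.le, sq_rpow hr.le]
  rw [show 2 * (-γ/2) = -γ by ring, show 2 * ((ε-γ)/2) = ε - γ by ring]
  rw [show ε - γ = -γ + ε by ring, Real.rpow_add hr]
  ring

/-! ### The gradient of the radial function -/

open Filter in
lemma aux_hasGradientAt (γ δ ε : ℝ) {N : ℕ} {y : EuclideanSpace ℝ (Fin N)} (hy : y ≠ 0) :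
    HasGradientAt (fun z : EuclideanSpace ℝ (Fin N) => ‖z‖ ^ (-γ) * (1 - δ * ‖z‖ ^ ε))
      ((2 * auxPhi' γ δ ε (‖y‖^2)) • y) y := by
  have hs : (‖y‖:ℝ)^2 ≠ 0 := pow_ne_zero 2 (norm_ne_zero_iff.mpr hy)
  have hPhi : HasDerivAt (auxPhi γ δ ε) (auxPhi' γ δ ε (‖y‖^2)) (‖y‖^2) :=
    auxPhi_hasDerivAt γ δ ε hs
  have hF : HasFDerivAt (fun z : EuclideanSpace ℝ (Fin N) => auxPhi γ δ ε (‖z‖^2))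
      ((auxPhi' γ δ ε (‖y‖^2)) • (2 • (innerSL ℝ y))) y :=
    HasDerivAt.comp_hasFDerivAt (f := fun z : EuclideanSpace ℝ (Fin N) => ‖z‖^2) y hPhi (hasStrictFDerivAt_norm_sq y).hasFDerivAt
  have hG : HasGradientAt (fun z : EuclideanSpace ℝ (Fin N) => auxPhi γ δ ε (‖z‖^2))
      ((2 * auxPhi' γ δ ε (‖y‖^2)) • y) y := by
    rw [hasGradientAt_iff_hasFDerivAt]
    refine hF.congr_fderiv ?_
    ext h
    simp [InnerProductSpace.toDual_apply_apply, real_inner_smul_left]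
    ring
  refine hG.congr_of_eventuallyEq ?_
  have hopen : IsOpen {z : EuclideanSpace ℝ (Fin N) | z ≠ 0} := isOpen_ne
  filter_upwards [hopen.mem_nhds hy] with z hz
  exact v_eq_Phi γ δ ε hz

/-! ### Reduction of the p-Laplacian to a one-dimensional derivative -/

open Filter in
lemma aux_pLap_sum (N : ℕ) (p : ℝ) (v : EuclideanSpace ℝ (Fin N) → ℝ)
    (x : EuclideanSpace ℝ (Fin N))
    (Psi : ℝ → ℝ) (Psi' : ℝ) (hPsi : HasDerivAt Psi Psi' (‖x‖^2))
    (hW : ∀ᶠ y in nhds x, (‖gradient v y‖ ^ (p-2)) • gradient v y = Psi (‖y‖^2) • y) :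
    (∑ i : Fin N,
      fderiv ℝ (fun y => (‖gradient v y‖ ^ (p - 2) • gradient v y) i) x
        (EuclideanSpace.single i 1)) = 2 * Psi' * ‖x‖^2 + N * Psi (‖x‖^2) := by
  have hsq : HasFDerivAt (fun z : EuclideanSpace ℝ (Fin N) => Psi (‖z‖^2))
      (Psi' • (2 • (innerSL ℝ x))) x :=
    hPsi.comp_hasFDerivAt x (hasStrictFDerivAt_norm_sq x).hasFDerivAt
  have key : ∀ i : Fin N,
      fderiv ℝ (fun y => (‖gradient v y‖ ^ (p - 2) • gradient v y) i) x
        (EuclideanSpace.single i 1)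
      = Psi' * (2 * (x i)) * (x i) + Psi (‖x‖^2) * 1 := by
    intro i
    have hcongr : (fun y => (‖gradient v y‖ ^ (p - 2) • gradient v y) i)
        =ᶠ[nhds x] (fun y : EuclideanSpace ℝ (Fin N) => Psi (‖y‖^2) * y i) := by
      filter_upwards [hW] with y hy
      rw [hy]; rfl
    rw [hcongr.fderiv_eq]
    have hmul : HasFDerivAt (fun y : EuclideanSpace ℝ (Fin N) => Psi (‖y‖^2) * y i)
        ((Psi (‖x‖^2)) • (EuclideanSpace.proj i : EuclideanSpace ℝ (Fin N) →L[ℝ] ℝ)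
          + (Psi' • (2 • (innerSL ℝ x))).smulRight (x i)) x := by
      have hp := (EuclideanSpace.proj i : EuclideanSpace ℝ (Fin N) →L[ℝ] ℝ).hasFDerivAt (x := x)
      refine (hsq.mul' hp).congr_fderiv ?_
      ext h
      simp
      ring
    rw [hmul.fderiv]
    simp [EuclideanSpace.inner_single_right, real_inner_comm]
    ring
  rw [Finset.sum_congr rfl (fun i _ => key i)]
  have hns : ∑ i : Fin N, (x i)^2 = ‖x‖^2 := by
    rw [← real_inner_self_eq_norm_sq]
    rw [PiLp.inner_apply]
    simp [sq]
  rw [Finset.sum_add_distrib]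
  simp only [Finset.sum_const, Finset.card_univ, Fintype.card_fin, nsmul_eq_mul, mul_one]
  rw [← hns]
  congr 1
  rw [Finset.mul_sum]
  exact Finset.sum_congr rfl fun i _ => by ring

theorem radial_supersolution_computation (N : ℕ) (hN : 2 ≤ N) (p μ γ δ ε : ℝ)
    (hp : 1 < p) (hpN : p < (N : ℝ)) (hμ0 : 0 ≤ μ)
    (x : EuclideanSpace ℝ (Fin N)) (hx : x ≠ 0)
    (hv : (1 : ℝ) - δ * ‖x‖ ^ ε ≠ 0)
    (hgrad : gradient (fun y : EuclideanSpace ℝ (Fin N) =>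
        ‖y‖ ^ (-γ) * (1 - δ * ‖y‖ ^ ε)) x ≠ 0) :
    -pLap N p (fun y : EuclideanSpace ℝ (Fin N) => ‖y‖ ^ (-γ) * (1 - δ * ‖y‖ ^ ε)) x -
        μ / ‖x‖ ^ p * |‖x‖ ^ (-γ) * (1 - δ * ‖x‖ ^ ε)| ^ (p - 2) *
          (‖x‖ ^ (-γ) * (1 - δ * ‖x‖ ^ ε)) =
      hfun N p μ γ ε (δ * ‖x‖ ^ ε) /
          (|1 - δ * ‖x‖ ^ ε| ^ (p - 2) * (1 - δ * ‖x‖ ^ ε) * ‖x‖ ^ p) *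
        (|‖x‖ ^ (-γ) * (1 - δ * ‖x‖ ^ ε)| ^ (p - 2) *
          (‖x‖ ^ (-γ) * (1 - δ * ‖x‖ ^ ε))) := by
  have hr : (0:ℝ) < ‖x‖ := norm_pos_iff.mpr hx
  have hs0 : ((‖x‖:ℝ)^2) ≠ 0 := pow_ne_zero 2 hr.ne'
  -- gradient formula
  have hgradf : ∀ y : EuclideanSpace ℝ (Fin N), y ≠ 0 →
      gradient (fun z : EuclideanSpace ℝ (Fin N) => ‖z‖ ^ (-γ) * (1 - δ * ‖z‖ ^ ε)) y
        = (2 * auxPhi' γ δ ε (‖y‖^2)) • y :=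
    fun y hy => (aux_hasGradientAt γ δ ε hy).gradient
  have hcx : 2 * auxPhi' γ δ ε (‖x‖^2) ≠ 0 := by
    intro h0
    exact hgrad (by rw [hgradf x hx, h0, zero_smul])
  -- the radial vector field
  have hW : ∀ᶠ y in nhds x,
      (‖gradient (fun z : EuclideanSpace ℝ (Fin N) => ‖z‖ ^ (-γ) * (1 - δ * ‖z‖ ^ ε)) y‖ ^ (p-2))
          • gradient (fun z : EuclideanSpace ℝ (Fin N) => ‖z‖ ^ (-γ) * (1 - δ * ‖z‖ ^ ε)) y
        = ((|2 * auxPhi' γ δ ε (‖y‖^2)| ^ (p-2) * (2 * auxPhi' γ δ ε (‖y‖^2)))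
            * ((‖y‖^2 : ℝ) ^ ((p-2)/2))) • y := by
    have hopen : IsOpen {z : EuclideanSpace ℝ (Fin N) | z ≠ 0} := isOpen_ne
    filter_upwards [hopen.mem_nhds hx] with y hy
    have hny : (0:ℝ) < ‖y‖ := norm_pos_iff.mpr hy
    rw [hgradf y hy, norm_smul, Real.norm_eq_abs,
      Real.mul_rpow (abs_nonneg _) (norm_nonneg _), smul_smul]
    congr 1
    rw [sq_rpow hny.le, show 2*((p-2)/2) = p-2 by ring]
    ring
  -- derivative of the radial profile of the vector field
  have hPsi : HasDerivAt
      (fun s : ℝ => (|2 * auxPhi' γ δ ε s| ^ (p-2) * (2 * auxPhi' γ δ ε s)) * s ^ ((p-2)/2))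
      (((p-1) * |2 * auxPhi' γ δ ε (‖x‖^2)| ^ (p-2) * (2 * auxPhi'' γ δ ε (‖x‖^2)))
          * ((‖x‖^2:ℝ) ^ ((p-2)/2))
        + (|2 * auxPhi' γ δ ε (‖x‖^2)| ^ (p-2) * (2 * auxPhi' γ δ ε (‖x‖^2)))
            * (((p-2)/2) * (‖x‖^2:ℝ) ^ ((p-2)/2 - 1))) (‖x‖^2) := by
    have hc' : HasDerivAt (fun s : ℝ => 2 * auxPhi' γ δ ε s)
        (2 * auxPhi'' γ δ ε (‖x‖^2)) (‖x‖^2) :=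
      (auxPhi'_hasDerivAt γ δ ε hs0).const_mul 2
    have hG := aux_hasDerivAt_abs_mul p hcx
    have hcomp := hG.comp (‖x‖^2) hc'
    have hpow : HasDerivAt (fun s : ℝ => s ^ ((p-2)/2))
        (((p-2)/2) * (‖x‖^2:ℝ) ^ ((p-2)/2 - 1)) (‖x‖^2) :=
      Real.hasDerivAt_rpow_const (Or.inl hs0)
    have hm := hcomp.mul hpow
    exact hm
  have hpLap : pLap N p (fun y : EuclideanSpace ℝ (Fin N) => ‖y‖ ^ (-γ) * (1 - δ * ‖y‖ ^ ε)) x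
      = 2 * (((p-1) * |2 * auxPhi' γ δ ε (‖x‖^2)| ^ (p-2) * (2 * auxPhi'' γ δ ε (‖x‖^2)))
          * ((‖x‖^2:ℝ) ^ ((p-2)/2))
        + (|2 * auxPhi' γ δ ε (‖x‖^2)| ^ (p-2) * (2 * auxPhi' γ δ ε (‖x‖^2)))
            * (((p-2)/2) * (‖x‖^2:ℝ) ^ ((p-2)/2 - 1))) * ‖x‖^2
        + N * ((|2 * auxPhi' γ δ ε (‖x‖^2)| ^ (p-2) * (2 * auxPhi' γ δ ε (‖x‖^2)))
            * ((‖x‖^2 : ℝ) ^ ((p-2)/2))) :=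
    aux_pLap_sum N p _ x _ _ hPsi hW
  -- power bookkeeping
  have E1 : 2 * auxPhi' γ δ ε (‖x‖^2)
      = -(‖x‖ ^ (-γ-2) * (γ - (γ - ε) * (δ * ‖x‖ ^ ε))) := by
    unfold auxPhi'
    rw [sq_rpow hr.le, sq_rpow hr.le,
      show 2 * (-γ/2-1) = -γ-2 by ring, show 2 * ((ε-γ)/2-1) = (-γ-2) + ε by ring,
      Real.rpow_add hr]
    ring
  have E2 : 2 * auxPhi'' γ δ ε (‖x‖^2)
      = (-γ)*(-γ/2-1) * ‖x‖ ^ (-γ-4)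
        - δ*(ε-γ)*((ε-γ)/2-1) * (‖x‖ ^ (-γ-4) * ‖x‖ ^ ε) := by
    unfold auxPhi''
    rw [sq_rpow hr.le, sq_rpow hr.le,
      show 2 * (-γ/2-1-1) = -γ-4 by ring, show 2 * ((ε-γ)/2-1-1) = (-γ-4) + ε by ring,
      Real.rpow_add hr]
    ring
  have Eabs : |2 * auxPhi' γ δ ε (‖x‖^2)| ^ (p-2)
      = ‖x‖ ^ ((-γ-2)*(p-2)) * |γ - (γ - ε) * (δ * ‖x‖ ^ ε)| ^ (p-2) := by
    rw [E1, abs_neg, abs_mul, abs_of_pos (Real.rpow_pos_of_pos hr _),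
      Real.mul_rpow (Real.rpow_nonneg hr.le _) (abs_nonneg _), ← Real.rpow_mul hr.le]
  have Hq1 : ((‖x‖:ℝ)^2) ^ ((p-2)/2) = ‖x‖ ^ (p-2) := by
    rw [sq_rpow hr.le, show 2*((p-2)/2) = p-2 by ring]
  have Hq2 : ((‖x‖:ℝ)^2) ^ ((p-2)/2 - 1) = ‖x‖ ^ (p-4) := by
    rw [sq_rpow hr.le, show 2*((p-2)/2-1) = p-4 by ring]
  have Hp1 : (‖x‖:ℝ) ^ (p-2) * (‖x‖:ℝ)^2 = ‖x‖ ^ p := by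
    rw [← Real.rpow_natCast ‖x‖ 2, ← Real.rpow_add hr]; congr 1; push_cast; ring
  have Hp2 : (‖x‖:ℝ) ^ (p-4) * (‖x‖:ℝ)^2 = ‖x‖ ^ (p-2) := by
    rw [← Real.rpow_natCast ‖x‖ 2, ← Real.rpow_add hr]; congr 1; push_cast; ring
  have HA : (‖x‖:ℝ) ^ ((-γ-2)*(p-2)) * ‖x‖ ^ (-γ-4) * ‖x‖ ^ p
      = ‖x‖ ^ (-(γ*(p-1))-p) := by
    rw [← Real.rpow_add hr, ← Real.rpow_add hr]
    congr 1; ring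
  have HB : (‖x‖:ℝ) ^ ((-γ-2)*(p-2)) * ‖x‖ ^ (-γ-2) * ‖x‖ ^ (p-2)
      = ‖x‖ ^ (-(γ*(p-1))-p) := by
    rw [← Real.rpow_add hr, ← Real.rpow_add hr]
    congr 1; ring
  have HD : (‖x‖:ℝ) ^ (-(γ*(p-1))-p) * ‖x‖ ^ p = ‖x‖ ^ (-(γ*(p-1))) := by
    rw [← Real.rpow_add hr]; congr 1; ring
  have Hv : |‖x‖ ^ (-γ) * (1 - δ * ‖x‖ ^ ε)| ^ (p-2) * (‖x‖ ^ (-γ) * (1 - δ * ‖x‖ ^ ε))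
      = ‖x‖ ^ (-(γ*(p-1))) * (|1 - δ * ‖x‖ ^ ε| ^ (p-2) * (1 - δ * ‖x‖ ^ ε)) := by
    rw [abs_mul, abs_of_pos (Real.rpow_pos_of_pos hr _),
      Real.mul_rpow (Real.rpow_nonneg hr.le _) (abs_nonneg _), ← Real.rpow_mul hr.le,
      show -(γ*(p-1)) = -γ*(p-2) + -γ by ring, Real.rpow_add hr]
    ring
  -- the key computation of the p-Laplacian
  have L1 : pLap N p (fun y : EuclideanSpace ℝ (Fin N) => ‖y‖ ^ (-γ) * (1 - δ * ‖y‖ ^ ε)) x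
      = -(‖x‖ ^ (-(γ*(p-1))-p) * (|γ - (γ - ε) * (δ * ‖x‖ ^ ε)| ^ (p-2)
          * (kfun N p (γ - ε) * (δ * ‖x‖ ^ ε) - kfun N p γ))) := by
    rw [hpLap, Eabs, E1, E2, Hq1, Hq2]
    unfold kfun
    linear_combination
      (2*(p-1) * (‖x‖ ^ ((-γ-2)*(p-2)) * |γ - (γ - ε) * (δ * ‖x‖ ^ ε)| ^ (p-2))
        * ((-γ)*(-γ/2-1) + (-(δ*(ε-γ)*((ε-γ)/2-1))) * ‖x‖ ^ ε) * ‖x‖ ^ (-γ-4)) * Hp1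
      + (-(p-2) * (‖x‖ ^ ((-γ-2)*(p-2)) * |γ - (γ - ε) * (δ * ‖x‖ ^ ε)| ^ (p-2))
          * (‖x‖ ^ (-γ-2)) * (γ - (γ - ε) * (δ * ‖x‖ ^ ε))) * Hp2
      + (2*(p-1) * (|γ - (γ - ε) * (δ * ‖x‖ ^ ε)| ^ (p-2))
        * ((-γ)*(-γ/2-1) + (-(δ*(ε-γ)*((ε-γ)/2-1))) * ‖x‖ ^ ε)) * HA
      + ((-(p-2) - N) * (|γ - (γ - ε) * (δ * ‖x‖ ^ ε)| ^ (p-2))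
          * (γ - (γ - ε) * (δ * ‖x‖ ^ ε))) * HB
  -- final assembly
  have hβA : (0:ℝ) < |1 - δ * ‖x‖ ^ ε| ^ (p-2) := Real.rpow_pos_of_pos (abs_pos.mpr hv) _
  have hrp : (0:ℝ) < ‖x‖ ^ p := Real.rpow_pos_of_pos hr p
  have hD : |1 - δ * ‖x‖ ^ ε| ^ (p-2) * (1 - δ * ‖x‖ ^ ε) * ‖x‖ ^ p ≠ 0 :=
    mul_ne_zero (mul_ne_zero hβA.ne' hv) hrp.ne'
  rw [L1, neg_neg, mul_assoc (μ / ‖x‖ ^ p), Hv]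
  unfold hfun
  rw [← HD]
  field_simp
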